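/- Let (M₁,‖·‖₁),…,(Mₙ,‖·‖ₙ) be normed finitely generated ℤ-modules forming a chain of inclusions M₁ ⊆ M₂ ⊆ ⋯ ⊆ Mₙ, where each ‖·‖ᵢ is the restriction of ‖·‖ₙ. With Qᵢ = Mᵢ/M_{i-1} for i ≥ 2 and Q₁ = M₁, equipped with quotient norms, one has λ_ℚ(Mₙ,‖·‖ₙ) ≤ Σ_{i=1}^{n} λ_ℚ(Qᵢ, ‖·‖_{i,Mᵢ↠Qᵢ}) · rk(Qᵢ) where the i = n term may be taken without the factor rk(Qₙ), i.e., λ_ℚ(Mₙ,‖·‖ₙ) ≤ λ_ℚ(Qₙ,‖·‖_{n,Mₙ↠Qₙ}) + Σ_{i=1}^{n-1} λ_ℚ(Qᵢ,‖·‖_{i,Mᵢ↠Qᵢ}) rk(Qᵢ). -/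

import Mathlib

open scoped TensorProduct
open Function LinearMap Submodule Module
set_option linter.unusedSectionVars false
set_option maxHeartbeats 1000000

/-- `N` is a norm on the real vector space `V`. -/
def IsNorm {V : Type*} [AddCommGroup V] [Module ℝ V] (N : V → ℝ) : Prop :=
  (∀ v, N v = 0 ↔ v = 0) ∧ (∀ (r : ℝ) (v : V), N (r • v) = |r| * N v) ∧
    ∀ v w, N (v + w) ≤ N v + N w

/-- `λ_ℚ(M, N)`: the infimum of all `l` such that some elements of `M` forming a
`ℚ`-basis of `M ⊗ ℚ` all have norm `≤ l`. -/
noncomputable def lambdaQ {M : Type*} [AddCommGroup M] (N : ℝ ⊗[ℤ] M → ℝ) : ℝ :=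
  sInf {l | ∃ (n : ℕ) (e : Fin n → M),
    LinearIndependent ℚ (fun i => ((1 : ℚ) ⊗ₜ[ℤ] e i : ℚ ⊗[ℤ] M)) ∧
    Submodule.span ℚ (Set.range fun i => ((1 : ℚ) ⊗ₜ[ℤ] e i : ℚ ⊗[ℤ] M)) = ⊤ ∧
    ∀ i, N ((1 : ℝ) ⊗ₜ[ℤ] e i) ≤ l}

/-- The quotient norm of `N` along a linear surjection `π`: `inf { N v | π v = t }`. -/
noncomputable def qNorm {X Y : Type*} [AddCommGroup X] [AddCommGroup Y]
    [Module ℝ X] [Module ℝ Y] (N : X → ℝ) (π : X →ₗ[ℝ] Y) (t : Y) : ℝ :=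
  sInf {c | ∃ v, π v = t ∧ N v = c}

/-- The operator norm of the real-linear map induced by `φ`. -/
noncomputable def opNorm {M₁ M₂ : Type*} [AddCommGroup M₁] [AddCommGroup M₂]
    (N₁ : ℝ ⊗[ℤ] M₁ → ℝ) (N₂ : ℝ ⊗[ℤ] M₂ → ℝ) (φ : M₁ →ₗ[ℤ] M₂) : ℝ :=
  sSup {c | ∃ v, N₁ v = 1 ∧ N₂ (LinearMap.baseChange ℝ φ v) = c}

section Norm
variable {V : Type*} [AddCommGroup V] [Module ℝ V] {N : V → ℝ}

lemma IsNorm.zero' (hN : IsNorm N) : N 0 = 0 := (hN.1 0).2 rfl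

lemma IsNorm.neg' (hN : IsNorm N) (v : V) : N (-v) = N v := by
  have := hN.2.1 (-1) v
  simpa using this

lemma IsNorm.nonneg (hN : IsNorm N) (v : V) : 0 ≤ N v := by
  have h := hN.2.2 v (-v)
  rw [add_neg_cancel, hN.zero', hN.neg'] at h
  linarith

lemma IsNorm.sum_le (hN : IsNorm N) {ι : Type*} (s : Finset ι) (f : ι → V) :
    N (∑ i ∈ s, f i) ≤ ∑ i ∈ s, N (f i) := by
  classical
  induction s using Finset.induction_on with
  | empty => simp [hN.zero']
  | insert _ _ hx ih =>
      rw [Finset.sum_insert hx, Finset.sum_insert hx]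
      exact le_trans (hN.2.2 _ _) (by linarith)
end Norm

section LamSet
variable {M : Type*} [AddCommGroup M]

/-- The defining set of `lambdaQ`. -/
def lamSet (N : ℝ ⊗[ℤ] M → ℝ) : Set ℝ :=
  {l | ∃ (n : ℕ) (e : Fin n → M),
    LinearIndependent ℚ (fun i => ((1 : ℚ) ⊗ₜ[ℤ] e i : ℚ ⊗[ℤ] M)) ∧
    Submodule.span ℚ (Set.range fun i => ((1 : ℚ) ⊗ₜ[ℤ] e i : ℚ ⊗[ℤ] M)) = ⊤ ∧
    ∀ i, N ((1 : ℝ) ⊗ₜ[ℤ] e i) ≤ l}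

lemma lambdaQ_def (N : ℝ ⊗[ℤ] M → ℝ) : lambdaQ N = sInf (lamSet N) := rfl

/-- Any linearly independent spanning family has cardinality `finrank`. -/
lemma card_eq_finrank {V : Type*} [AddCommGroup V] [Module ℚ V] {m : ℕ} {v : Fin m → V}
    (hli : LinearIndependent ℚ v) (hsp : Submodule.span ℚ (Set.range v) = ⊤) :
    m = Module.finrank ℚ V := by
  have b : Basis (Fin m) ℚ V := Basis.mk hli (by rw [hsp])
  rw [finrank_eq_card_basis b, Fintype.card_fin]

/-- There is a `ℚ`-basis of `ℚ ⊗ M` consisting of elements of `M`. -/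
lemma exists_tmul_basis (M : Type*) [AddCommGroup M] [Module.Finite ℤ M] :
    ∃ (m : ℕ) (e : Fin m → M),
      LinearIndependent ℚ (fun i => ((1 : ℚ) ⊗ₜ[ℤ] e i : ℚ ⊗[ℤ] M)) ∧
      Submodule.span ℚ (Set.range fun i => ((1 : ℚ) ⊗ₜ[ℤ] e i : ℚ ⊗[ℤ] M)) = ⊤ := by
  classical
  set T : Set (ℚ ⊗[ℤ] M) := Set.range (fun m : M => (1 : ℚ) ⊗ₜ[ℤ] m) with hT
  have hTspan : Submodule.span ℚ T = ⊤ := by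
    rw [Submodule.eq_top_iff']
    intro x
    induction x with
    | zero => exact Submodule.zero_mem _
    | tmul q m =>
        have : (q ⊗ₜ[ℤ] m : ℚ ⊗[ℤ] M) = q • ((1 : ℚ) ⊗ₜ[ℤ] m) := by
          rw [TensorProduct.smul_tmul', smul_eq_mul, mul_one]
        rw [this]
        exact Submodule.smul_mem _ _ (Submodule.subset_span ⟨m, rfl⟩)
    | add x y hx hy => exact Submodule.add_mem _ hx hy
  obtain ⟨s, hsT, hs_span, hs_li⟩ := exists_linearIndependent ℚ T
  rw [hTspan] at hs_span
  have : Module.Finite ℚ (ℚ ⊗[ℤ] M) := inferInstance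
  have hfin : s.Finite := by
    have : Finite ↥s := hs_li.finite
    exact s.toFinite
  obtain ⟨m, ⟨φe⟩⟩ : ∃ m, Nonempty (↥s ≃ Fin m) := by
    have : Fintype ↥s := hfin.fintype
    exact ⟨Fintype.card ↥s, ⟨Fintype.equivFin ↥s⟩⟩
  set φ : Fin m → ℚ ⊗[ℤ] M := fun i => ((φe.symm i : ↥s) : ℚ ⊗[ℤ] M) with hφ
  have hφr : Set.range φ = s := by
    have : Set.range φ = Set.range (Subtype.val : ↥s → ℚ ⊗[ℤ] M) :=
      Function.Surjective.range_comp φe.symm.surjective Subtype.val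
    rw [this, Subtype.range_coe]
  have hφli : LinearIndependent ℚ φ := hs_li.comp _ φe.symm.injective
  have hφsp : Submodule.span ℚ (Set.range φ) = ⊤ := by rw [hφr]; exact hs_span
  have hmem : ∀ i, ∃ a : M, (1 : ℚ) ⊗ₜ[ℤ] a = φ i := fun i => hsT (φe.symm i).2
  choose e he using hmem
  refine ⟨m, e, ?_, ?_⟩
  · simpa [funext he] using hφli
  · have h2 : (fun i => ((1 : ℚ) ⊗ₜ[ℤ] e i : ℚ ⊗[ℤ] M)) = φ := funext he
    rw [h2]; exact hφsp

lemma lamSet_nonempty (N : ℝ ⊗[ℤ] M → ℝ) [Module.Finite ℤ M] : (lamSet N).Nonempty := by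
  obtain ⟨m, e, hli, hsp⟩ := exists_tmul_basis M
  obtain ⟨l, hl⟩ : ∃ l, ∀ i, N ((1 : ℝ) ⊗ₜ[ℤ] e i) ≤ l := by
    rcases Finite.exists_le (fun i : Fin m => N ((1 : ℝ) ⊗ₜ[ℤ] e i)) with ⟨l, hl⟩
    exact ⟨l, hl⟩
  exact ⟨l, m, e, hli, hsp, hl⟩

/-- If the rank is zero the module `ℚ ⊗ M` is trivial and `lamSet` is everything. -/
lemma lamSet_univ_of_subsingleton (N : ℝ ⊗[ℤ] M → ℝ) (h : Subsingleton (ℚ ⊗[ℤ] M)) :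
    lamSet N = Set.univ := by
  ext l
  simp only [Set.mem_univ, iff_true]
  refine ⟨0, Fin.elim0, linearIndependent_empty_type, ?_, fun i => i.elim0⟩
  exact Subsingleton.elim _ _

lemma lambdaQ_of_univ (N : ℝ ⊗[ℤ] M → ℝ) (h : lamSet N = Set.univ) : lambdaQ N = 0 := by
  rw [lambdaQ_def, h]
  apply Real.sInf_of_not_bddBelow
  rintro ⟨b, hb⟩
  have := hb (Set.mem_univ (b - 1))
  linarith

lemma lambdaQ_nonneg (N : ℝ ⊗[ℤ] M → ℝ) (h0 : ∀ v, 0 ≤ N v) : 0 ≤ lambdaQ N := by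
  by_cases h : ∀ l ∈ lamSet N, 0 ≤ l
  · exact Real.sInf_nonneg h
  · push_neg at h
    obtain ⟨l, ⟨n, e, hli, hsp, hbd⟩, hlneg⟩ := h
    have hn : n = 0 := by
      by_contra hne
      have i : Fin n := ⟨0, Nat.pos_of_ne_zero hne⟩
      exact absurd (le_trans (h0 _) (hbd i)) (by linarith)
    subst hn
    have hsub : Subsingleton (ℚ ⊗[ℤ] M) := by
      have : Submodule.span ℚ (Set.range fun i : Fin 0 =>
          ((1 : ℚ) ⊗ₜ[ℤ] e i : ℚ ⊗[ℤ] M)) = ⊥ := by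
        rw [Set.range_eq_empty, Submodule.span_empty]
      rw [this] at hsp
      constructor
      intro a b
      have ha : a ∈ (⊥ : Submodule ℚ (ℚ ⊗[ℤ] M)) := hsp ▸ Submodule.mem_top
      have hb : b ∈ (⊥ : Submodule ℚ (ℚ ⊗[ℤ] M)) := hsp ▸ Submodule.mem_top
      rw [Submodule.mem_bot] at ha hb
      rw [ha, hb]
    rw [lambdaQ_of_univ N (lamSet_univ_of_subsingleton N hsub)]

lemma lamSet_upward {N : ℝ ⊗[ℤ] M → ℝ} {l l' : ℝ} (hl : l ∈ lamSet N) (h : l ≤ l') :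
    l' ∈ lamSet N := by
  obtain ⟨m, e, hli, hsp, hbd⟩ := hl
  exact ⟨m, e, hli, hsp, fun i => le_trans (hbd i) h⟩

lemma lambdaQ_le {N : ℝ ⊗[ℤ] M → ℝ} {l : ℝ} (hl : l ∈ lamSet N) (h0 : 0 ≤ l) :
    lambdaQ N ≤ l := by
  by_cases hb : BddBelow (lamSet N)
  · exact csInf_le hb hl
  · rw [lambdaQ_def, Real.sInf_of_not_bddBelow hb]; exact h0

lemma exists_lt_lambdaQ_add {N : ℝ ⊗[ℤ] M → ℝ} (hne : (lamSet N).Nonempty)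
    {ε : ℝ} (hε : 0 < ε) : ∃ l ∈ lamSet N, l < lambdaQ N + ε :=
  Real.lt_sInf_add_pos hne hε

lemma lambdaQ_eq_zero_of_subsingleton (N : ℝ ⊗[ℤ] M → ℝ) (h : Subsingleton (ℚ ⊗[ℤ] M)) :
    lambdaQ N = 0 := lambdaQ_of_univ N (lamSet_univ_of_subsingleton N h)

end LamSet

section QNorm
variable {X Y : Type*} [AddCommGroup X] [AddCommGroup Y] [Module ℝ X] [Module ℝ Y]
  {N : X → ℝ} {π : X →ₗ[ℝ] Y}

lemma qNorm_nonneg (h0 : ∀ v, 0 ≤ N v) (t : Y) : 0 ≤ qNorm N π t :=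
  Real.sInf_nonneg (by rintro c ⟨v, -, rfl⟩; exact h0 v)

lemma exists_qNorm_lift (hsurj : Surjective π) (t : Y) {ε : ℝ} (hε : 0 < ε) :
    ∃ v, π v = t ∧ N v ≤ qNorm N π t + ε := by
  obtain ⟨v₀, hv₀⟩ := hsurj t
  have hne : {c | ∃ v, π v = t ∧ N v = c}.Nonempty := ⟨N v₀, v₀, hv₀, rfl⟩
  obtain ⟨c, ⟨v, hv, rfl⟩, hc⟩ := Real.lt_sInf_add_pos hne hε
  exact ⟨v, hv, le_of_lt hc⟩

end QNorm

section RealCoords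
variable {M : Type*} [AddCommGroup M]

/-- A family spanning `ℚ ⊗ M` over `ℚ` spans `ℝ ⊗ M` over `ℝ`, with explicit coordinates. -/
lemma exists_real_coords {m : ℕ} {e : Fin m → M}
    (hsp : Submodule.span ℚ (Set.range fun i => ((1 : ℚ) ⊗ₜ[ℤ] e i : ℚ ⊗[ℤ] M)) = ⊤)
    (w : ℝ ⊗[ℤ] M) :
    ∃ t : Fin m → ℝ, w = ∑ i, t i • ((1 : ℝ) ⊗ₜ[ℤ] e i : ℝ ⊗[ℤ] M) := by
  classical
  set g : ℚ ⊗[ℤ] M →ₗ[ℤ] ℝ ⊗[ℤ] M :=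
    LinearMap.rTensor M ((algebraMap ℚ ℝ).toAddMonoidHom.toIntLinearMap) with hg
  have hg1 : ∀ (q : ℚ) (a : M), g (q ⊗ₜ[ℤ] a) = (q : ℝ) ⊗ₜ[ℤ] a := by
    intro q a
    rfl
  have hspanR : Submodule.span ℝ (Set.range fun i => ((1 : ℝ) ⊗ₜ[ℤ] e i : ℝ ⊗[ℤ] M)) = ⊤ := by
    rw [Submodule.eq_top_iff']
    intro x
    induction x with
    | zero => exact Submodule.zero_mem _
    | add x y hx hy => exact Submodule.add_mem _ hx hy
    | tmul r a =>
        have h1 : (r ⊗ₜ[ℤ] a : ℝ ⊗[ℤ] M) = r • ((1 : ℝ) ⊗ₜ[ℤ] a) := by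
          rw [TensorProduct.smul_tmul', smul_eq_mul, mul_one]
        rw [h1]
        refine Submodule.smul_mem _ _ ?_
        have ha : ((1 : ℚ) ⊗ₜ[ℤ] a : ℚ ⊗[ℤ] M) ∈
            Submodule.span ℚ (Set.range fun i => ((1 : ℚ) ⊗ₜ[ℤ] e i : ℚ ⊗[ℤ] M)) := by
          rw [hsp]; trivial
        obtain ⟨c, hc⟩ := (mem_span_range_iff_exists_fun ℚ).1 ha
        have h2 : ((1 : ℝ) ⊗ₜ[ℤ] a : ℝ ⊗[ℤ] M) = ∑ i, (c i : ℝ) • ((1 : ℝ) ⊗ₜ[ℤ] e i) := by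
          have h3 : ((1 : ℚ) ⊗ₜ[ℤ] a : ℚ ⊗[ℤ] M) = ∑ i, (c i ⊗ₜ[ℤ] e i) := by
            rw [← hc]
            refine Finset.sum_congr rfl fun i _ => ?_
            rw [TensorProduct.smul_tmul', smul_eq_mul, mul_one]
          have h4 := congrArg g h3
          rw [map_sum] at h4
          simp only [hg1] at h4
          rw [Rat.cast_one] at h4
          rw [h4]
          refine Finset.sum_congr rfl fun i _ => ?_
          rw [TensorProduct.smul_tmul', smul_eq_mul, mul_one]
        rw [h2]
        exact Submodule.sum_mem _ fun i _ =>
          Submodule.smul_mem _ _ (Submodule.subset_span ⟨i, rfl⟩)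
  have hw : w ∈ Submodule.span ℝ (Set.range fun i => ((1 : ℝ) ⊗ₜ[ℤ] e i : ℝ ⊗[ℤ] M)) := by
    rw [hspanR]; trivial
  obtain ⟨t, ht⟩ := (mem_span_range_iff_exists_fun ℝ).1 hw
  exact ⟨t, ht.symm⟩

/-- Rounding: any real vector is within `m * c` of a lattice point. -/
lemma round_lemma {N : ℝ ⊗[ℤ] M → ℝ} (hN : IsNorm N) {m : ℕ} {e : Fin m → M}
    (hsp : Submodule.span ℚ (Set.range fun i => ((1 : ℚ) ⊗ₜ[ℤ] e i : ℚ ⊗[ℤ] M)) = ⊤)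
    {c : ℝ} (hbd : ∀ i, N ((1 : ℝ) ⊗ₜ[ℤ] e i) ≤ c) (w : ℝ ⊗[ℤ] M) :
    ∃ a : M, N (w - (1 : ℝ) ⊗ₜ[ℤ] a) ≤ (m : ℝ) * c := by
  obtain ⟨t, rfl⟩ := exists_real_coords hsp w
  refine ⟨∑ i, ⌊t i⌋ • e i, ?_⟩
  have h1 : ((1 : ℝ) ⊗ₜ[ℤ] (∑ i, ⌊t i⌋ • e i) : ℝ ⊗[ℤ] M)
      = ∑ i, ((⌊t i⌋ : ℝ)) • ((1 : ℝ) ⊗ₜ[ℤ] e i) := by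
    rw [TensorProduct.tmul_sum]
    refine Finset.sum_congr rfl fun i _ => ?_
    rw [TensorProduct.tmul_smul, Int.cast_smul_eq_zsmul]
  rw [h1, ← Finset.sum_sub_distrib]
  have h2 : ∀ i : Fin m, t i • ((1 : ℝ) ⊗ₜ[ℤ] e i : ℝ ⊗[ℤ] M)
      - (⌊t i⌋ : ℝ) • ((1 : ℝ) ⊗ₜ[ℤ] e i) = (t i - ⌊t i⌋) • ((1 : ℝ) ⊗ₜ[ℤ] e i) :=
    fun i => (sub_smul _ _ _).symm
  calc N (∑ i, (t i • ((1 : ℝ) ⊗ₜ[ℤ] e i : ℝ ⊗[ℤ] M)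
          - (⌊t i⌋ : ℝ) • ((1 : ℝ) ⊗ₜ[ℤ] e i)))
      ≤ ∑ i, N (t i • ((1 : ℝ) ⊗ₜ[ℤ] e i : ℝ ⊗[ℤ] M)
          - (⌊t i⌋ : ℝ) • ((1 : ℝ) ⊗ₜ[ℤ] e i)) := hN.sum_le _ _
    _ ≤ ∑ _i : Fin m, c := by
        refine Finset.sum_le_sum fun i _ => ?_
        rw [h2 i, hN.2.1]
        refine le_trans (mul_le_of_le_one_left (hN.nonneg _) ?_) (hbd i)
        rw [abs_of_nonneg (by linarith [Int.floor_le (t i)] : (0:ℝ) ≤ t i - ⌊t i⌋)]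
        linarith [Int.lt_floor_add_one (t i)]
    _ = (m : ℝ) * c := by simp [Finset.sum_const, nsmul_eq_mul]

end RealCoords

section BasisExtend

lemma basis_extend {V W U : Type*} [AddCommGroup V] [AddCommGroup W] [AddCommGroup U]
    [Module ℚ V] [Module ℚ W] [Module ℚ U] [FiniteDimensional ℚ W]
    (f : V →ₗ[ℚ] W) (g : W →ₗ[ℚ] U) (hexact : LinearMap.ker g = LinearMap.range f)
    (hf : Injective f) {p r : ℕ} {va : Fin p → V} {wb : Fin r → W}
    (hva_li : LinearIndependent ℚ va) (hva_sp : Submodule.span ℚ (Set.range va) = ⊤)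
    (hu_li : LinearIndependent ℚ (⇑g ∘ wb))
    (hu_sp : Submodule.span ℚ (Set.range (⇑g ∘ wb)) = ⊤) :
    LinearIndependent ℚ (Fin.append (⇑f ∘ va) wb) ∧
      Submodule.span ℚ (Set.range (Fin.append (⇑f ∘ va) wb)) = ⊤ := by
  classical
  have hsp : ⊤ ≤ Submodule.span ℚ (Set.range (Fin.append (⇑f ∘ va) wb)) := by
    intro x _
    have hgx : g x ∈ Submodule.span ℚ (Set.range (⇑g ∘ wb)) := by rw [hu_sp]; trivial
    obtain ⟨c, hc⟩ := (mem_span_range_iff_exists_fun ℚ).1 hgx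
    set y := x - ∑ j, c j • wb j with hy
    have hgy : g y = 0 := by
      rw [hy, map_sub, map_sum]
      simp only [map_smul]
      rw [sub_eq_zero, ← hc]
      rfl
    have hyr : y ∈ LinearMap.range f := by rw [← hexact]; exact hgy
    obtain ⟨v, hv⟩ := hyr
    have hvsp : v ∈ Submodule.span ℚ (Set.range va) := by rw [hva_sp]; trivial
    obtain ⟨d, hd⟩ := (mem_span_range_iff_exists_fun ℚ).1 hvsp
    have h5 : f v = ∑ i, d i • f (va i) := by
      rw [← hd, map_sum]; simp only [map_smul]
    have hx : x = ∑ i, d i • f (va i) + ∑ j, c j • wb j := by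
      have h6 : x = f v + ∑ j, c j • wb j := by
        rw [hv, hy, sub_add_cancel]
      rw [h6, h5]
    rw [hx]
    refine Submodule.add_mem _ (Submodule.sum_mem _ fun i _ => ?_)
      (Submodule.sum_mem _ fun j _ => ?_)
    · refine Submodule.smul_mem _ _ (Submodule.subset_span ⟨Fin.castAdd r i, ?_⟩)
      rw [Fin.append_left]; rfl
    · refine Submodule.smul_mem _ _ (Submodule.subset_span ⟨Fin.natAdd p j, ?_⟩)
      rw [Fin.append_right]
  -- dimension count
  have hrg : LinearMap.range g = ⊤ := by
    refine top_unique ?_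
    rw [← hu_sp]
    refine Submodule.span_le.2 ?_
    rintro _ ⟨j, rfl⟩
    exact ⟨wb j, rfl⟩
  have hfli : LinearIndependent ℚ (⇑f ∘ va) := hva_li.map' f (LinearMap.ker_eq_bot.2 hf)
  have hkerf : LinearMap.range f = Submodule.span ℚ (Set.range (⇑f ∘ va)) := by
    rw [Set.range_comp, Submodule.span_image, hva_sp, Submodule.map_top]
  have hdim : p + r = Module.finrank ℚ W := by
    have h7 := LinearMap.finrank_range_add_finrank_ker g
    rw [hrg, finrank_top, hexact, hkerf, finrank_span_eq_card hfli, Fintype.card_fin] at h7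
    have h8 : r = Module.finrank ℚ U := card_eq_finrank hu_li hu_sp
    omega
  have hli : LinearIndependent ℚ (Fin.append (⇑f ∘ va) wb) :=
    linearIndependent_of_top_le_span_of_card_eq_finrank hsp
      (by rw [Fintype.card_fin]; exact hdim)
  exact ⟨hli, top_unique hsp⟩

end BasisExtend


section Step
variable {A B : Type*} [AddCommGroup A] [AddCommGroup B]
  [Module.Finite ℤ A] [Module.Finite ℤ B]
  (NA : ℝ ⊗[ℤ] A → ℝ) (NB : ℝ ⊗[ℤ] B → ℝ)
  (α : A →ₗ[ℤ] B)

/-- Exactness of `ℝ ⊗ A → ℝ ⊗ B → ℝ ⊗ Q` at the middle spot. -/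
lemma exact_real (w : ℝ ⊗[ℤ] B)
    (hw : LinearMap.baseChange ℝ (LinearMap.range α).mkQ w = 0) :
    ∃ u : ℝ ⊗[ℤ] A, LinearMap.baseChange ℝ α u = w := by
  have hex := lTensor_exact (f := α) (g := (LinearMap.range α).mkQ) ℝ
    (LinearMap.exact_map_mkQ_range α) (Submodule.mkQ_surjective _)
  have h1 : (⇑(LinearMap.baseChange ℝ ((LinearMap.range α).mkQ))) w = 0 := hw
  rw [LinearMap.baseChange_eq_ltensor] at h1
  obtain ⟨u, hu⟩ := (hex w).1 h1
  refine ⟨u, ?_⟩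
  rw [LinearMap.baseChange_eq_ltensor]
  exact hu

lemma surj_real :
    Surjective (LinearMap.baseChange ℝ (LinearMap.range α).mkQ :
      ℝ ⊗[ℤ] B →ₗ[ℝ] ℝ ⊗[ℤ] (B ⧸ LinearMap.range α)) := by
  have := lTensor_surjective (R := ℤ) ℝ (Submodule.mkQ_surjective (LinearMap.range α))
  intro y
  obtain ⟨x, hx⟩ := this y
  exact ⟨x, by rw [LinearMap.baseChange_eq_ltensor]; exact hx⟩

lemma exact_rat (hinj : Injective α) :
    LinearMap.ker (LinearMap.baseChange ℚ (LinearMap.range α).mkQ)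
      = LinearMap.range (LinearMap.baseChange ℚ α) ∧
    Injective (LinearMap.baseChange ℚ α) := by
  constructor
  · have hex := lTensor_exact (f := α) (g := (LinearMap.range α).mkQ) ℚ
      (LinearMap.exact_map_mkQ_range α) (Submodule.mkQ_surjective _)
    ext x
    simp only [LinearMap.mem_ker, LinearMap.mem_range]
    constructor
    · intro hx
      have h1 : (⇑(LinearMap.lTensor ℚ ((LinearMap.range α).mkQ))) x = 0 := by
        rw [← LinearMap.baseChange_eq_ltensor]; exact hx
      obtain ⟨u, hu⟩ := (hex x).1 h1
      exact ⟨u, by rw [LinearMap.baseChange_eq_ltensor]; exact hu⟩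
    · rintro ⟨u, rfl⟩
      have h2 := (hex (LinearMap.lTensor ℚ α u)).2 ⟨u, rfl⟩
      rw [LinearMap.baseChange_eq_ltensor, LinearMap.baseChange_eq_ltensor]
      exact h2
  · have : Module.Flat ℤ ℚ := IsLocalization.flat _ (nonZeroDivisors ℤ)
    have h := Module.Flat.lTensor_preserves_injective_linearMap (M := ℚ) α hinj
    rw [LinearMap.baseChange_eq_ltensor]
    exact h

end Step

section StepMain
variable {A B : Type*} [AddCommGroup A] [AddCommGroup B]
  [Module.Finite ℤ A] [Module.Finite ℤ B]
  {NA : ℝ ⊗[ℤ] A → ℝ} {NB : ℝ ⊗[ℤ] B → ℝ}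
  {α : A →ₗ[ℤ] B}

/-- Core construction: good integral lifts of a basis of the quotient. -/
lemma step_core (hNA : IsNorm NA) (hNB : IsNorm NB)
    (hiso : ∀ v, NB (LinearMap.baseChange ℝ α v) = NA v)
    {cA : ℝ}
    (hcov : ∀ ε > (0:ℝ), ∀ w : ℝ ⊗[ℤ] A, ∃ a : A, NA (w - (1:ℝ) ⊗ₜ[ℤ] a) ≤ cA + ε)
    {ε : ℝ} (hε : 0 < ε) :
    ∃ (r : ℕ) (q : Fin r → B ⧸ LinearMap.range α) (b : Fin r → B) (v : Fin r → ℝ ⊗[ℤ] B),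
      r = Module.finrank ℚ (ℚ ⊗[ℤ] (B ⧸ LinearMap.range α)) ∧
      LinearIndependent ℚ (fun j => ((1:ℚ) ⊗ₜ[ℤ] q j : ℚ ⊗[ℤ] (B ⧸ LinearMap.range α))) ∧
      Submodule.span ℚ (Set.range fun j =>
        ((1:ℚ) ⊗ₜ[ℤ] q j : ℚ ⊗[ℤ] (B ⧸ LinearMap.range α))) = ⊤ ∧
      (∀ j, (LinearMap.range α).mkQ (b j) = q j) ∧
      (∀ j, LinearMap.baseChange ℝ (LinearMap.range α).mkQ (v j) = (1:ℝ) ⊗ₜ[ℤ] q j ∧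
        NB (v j) ≤ lambdaQ (qNorm NB (LinearMap.baseChange ℝ (LinearMap.range α).mkQ)) + ε) ∧
      (∀ j, NB ((1:ℝ) ⊗ₜ[ℤ] b j) ≤
        lambdaQ (qNorm NB (LinearMap.baseChange ℝ (LinearMap.range α).mkQ)) + cA + ε) := by
  classical
  set qN := qNorm NB (LinearMap.baseChange ℝ (LinearMap.range α).mkQ) with hqN
  set T := lambdaQ qN with hT
  set ε' := ε / 3 with hε'
  have hε'0 : 0 < ε' := by positivity
  obtain ⟨l, hl_mem, hl_lt⟩ := exists_lt_lambdaQ_add (N := qN) (lamSet_nonempty qN) hε'0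
  obtain ⟨r, q, hq_li, hq_sp, hq_bd⟩ := hl_mem
  have hr : r = Module.finrank ℚ (ℚ ⊗[ℤ] (B ⧸ LinearMap.range α)) :=
    card_eq_finrank hq_li hq_sp
  -- real lifts
  have hsurj := surj_real α
  have hv : ∀ j, ∃ v, LinearMap.baseChange ℝ (LinearMap.range α).mkQ v = (1:ℝ) ⊗ₜ[ℤ] q j ∧
      NB v ≤ qN ((1:ℝ) ⊗ₜ[ℤ] q j) + ε' := fun j =>
    exists_qNorm_lift hsurj _ hε'0
  choose v hv1 hv2 using hv
  have hvT : ∀ j, NB (v j) ≤ T + ε := by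
    intro j
    calc NB (v j) ≤ qN ((1:ℝ) ⊗ₜ[ℤ] q j) + ε' := hv2 j
      _ ≤ l + ε' := by have := hq_bd j; linarith
      _ ≤ T + ε := by rw [hε'] at hε'0 ⊢; linarith
  -- integral lifts
  have hb0 : ∀ j, ∃ b0 : B, (LinearMap.range α).mkQ b0 = q j := fun j =>
    Submodule.mkQ_surjective _ (q j)
  choose b0 hb0 using hb0
  -- correct the integral lifts
  have hker : ∀ j, ∃ u : ℝ ⊗[ℤ] A,
      LinearMap.baseChange ℝ α u = (1:ℝ) ⊗ₜ[ℤ] b0 j - v j := by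
    intro j
    refine exact_real α _ ?_
    rw [map_sub, hv1 j, LinearMap.baseChange_tmul, hb0 j, sub_self]
  choose u hu using hker
  have ha : ∀ j, ∃ a : A, NA (u j - (1:ℝ) ⊗ₜ[ℤ] a) ≤ cA + ε' := fun j =>
    hcov ε' hε'0 (u j)
  choose a ha using ha
  refine ⟨r, q, fun j => b0 j - α (a j), v, hr, hq_li, hq_sp, ?_, fun j => ⟨hv1 j, hvT j⟩, ?_⟩
  · intro j
    rw [map_sub, hb0 j]
    have : (LinearMap.range α).mkQ (α (a j)) = 0 := by
      rw [Submodule.mkQ_apply, Submodule.Quotient.mk_eq_zero]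
      exact ⟨a j, rfl⟩
    rw [this, sub_zero]
  · intro j
    have hsplit : ((1:ℝ) ⊗ₜ[ℤ] (b0 j - α (a j)) : ℝ ⊗[ℤ] B)
        = v j + LinearMap.baseChange ℝ α (u j - (1:ℝ) ⊗ₜ[ℤ] a j) := by
      rw [TensorProduct.tmul_sub, map_sub, hu j, LinearMap.baseChange_tmul]
      abel
    rw [hsplit]
    calc NB (v j + LinearMap.baseChange ℝ α (u j - (1:ℝ) ⊗ₜ[ℤ] a j))
        ≤ NB (v j) + NB (LinearMap.baseChange ℝ α (u j - (1:ℝ) ⊗ₜ[ℤ] a j)) := hNB.2.2 _ _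
      _ = NB (v j) + NA (u j - (1:ℝ) ⊗ₜ[ℤ] a j) := by rw [hiso]
      _ ≤ (T + 2 * ε') + (cA + ε') := by
          have h1 : NB (v j) ≤ T + 2 * ε' := by
            calc NB (v j) ≤ qN ((1:ℝ) ⊗ₜ[ℤ] q j) + ε' := hv2 j
              _ ≤ l + ε' := by have := hq_bd j; linarith
              _ ≤ T + 2 * ε' := by linarith
          linarith [ha j]
      _ ≤ T + cA + ε := by rw [hε'] at hε'0 ⊢; linarith

/-- Covering estimate for `B` from one for `A`. -/
lemma step_cov (hNA : IsNorm NA) (hNB : IsNorm NB)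
    (hiso : ∀ v, NB (LinearMap.baseChange ℝ α v) = NA v)
    {cA : ℝ}
    (hcov : ∀ ε > (0:ℝ), ∀ w : ℝ ⊗[ℤ] A, ∃ a : A, NA (w - (1:ℝ) ⊗ₜ[ℤ] a) ≤ cA + ε)
    {ε : ℝ} (hε : 0 < ε) (w : ℝ ⊗[ℤ] B) :
    ∃ b : B, NB (w - (1:ℝ) ⊗ₜ[ℤ] b) ≤ cA +
      lambdaQ (qNorm NB (LinearMap.baseChange ℝ (LinearMap.range α).mkQ)) *
        (Module.finrank ℚ (ℚ ⊗[ℤ] (B ⧸ LinearMap.range α)) : ℝ) + ε := by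
  classical
  set T := lambdaQ (qNorm NB (LinearMap.baseChange ℝ (LinearMap.range α).mkQ)) with hT
  set R : ℝ := (Module.finrank ℚ (ℚ ⊗[ℤ] (B ⧸ LinearMap.range α)) : ℝ) with hR
  have hR0 : 0 ≤ R := by rw [hR]; positivity
  have hT0 : 0 ≤ T := lambdaQ_nonneg _ (qNorm_nonneg hNB.nonneg)
  set ε' := ε / (2 * R + 2) with hε'
  have hε'0 : 0 < ε' := by rw [hε']; positivity
  obtain ⟨r, q, b, v, hr, hq_li, hq_sp, hmk, hv, hb⟩ :=
    step_core hNA hNB hiso hcov hε'0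
  obtain ⟨t, ht⟩ := exists_real_coords hq_sp
    (LinearMap.baseChange ℝ (LinearMap.range α).mkQ w)
  have hπb : ∀ j, LinearMap.baseChange ℝ (LinearMap.range α).mkQ ((1:ℝ) ⊗ₜ[ℤ] b j)
      = (1:ℝ) ⊗ₜ[ℤ] q j := by
    intro j; rw [LinearMap.baseChange_tmul, hmk j]
  set u := ∑ j, (t j - ⌊t j⌋) • v j with hu
  set w' := w - ∑ j, ((⌊t j⌋ : ℝ)) • ((1:ℝ) ⊗ₜ[ℤ] b j) with hw'
  have hker : LinearMap.baseChange ℝ (LinearMap.range α).mkQ (w' - u) = 0 := by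
    rw [hw', hu, map_sub, map_sub, map_sum, map_sum]
    simp only [map_smul, hπb, (hv _).1]
    rw [ht, ← Finset.sum_sub_distrib, ← Finset.sum_sub_distrib]
    refine Finset.sum_eq_zero fun j _ => ?_
    module
  obtain ⟨y, hy⟩ := exact_real α _ hker
  obtain ⟨a, haa⟩ := hcov ε' hε'0 y
  refine ⟨(∑ j, ⌊t j⌋ • b j) + α a, ?_⟩
  have htm : ((1:ℝ) ⊗ₜ[ℤ] ((∑ j, ⌊t j⌋ • b j) + α a) : ℝ ⊗[ℤ] B)
      = ∑ j, ((⌊t j⌋ : ℝ)) • ((1:ℝ) ⊗ₜ[ℤ] b j) + (1:ℝ) ⊗ₜ[ℤ] (α a) := by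
    rw [TensorProduct.tmul_add, TensorProduct.tmul_sum]
    congr 1
    refine Finset.sum_congr rfl fun j _ => ?_
    rw [TensorProduct.tmul_smul, Int.cast_smul_eq_zsmul]
  have hkey : w - (1:ℝ) ⊗ₜ[ℤ] ((∑ j, ⌊t j⌋ • b j) + α a)
      = LinearMap.baseChange ℝ α (y - (1:ℝ) ⊗ₜ[ℤ] a) + u := by
    rw [htm, map_sub, hy, LinearMap.baseChange_tmul]
    rw [hw']
    abel
  rw [hkey]
  have hub : NB u ≤ R * (T + ε') := by
    calc NB u ≤ ∑ j, NB ((t j - ⌊t j⌋) • v j) := hNB.sum_le _ _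
      _ ≤ ∑ _j : Fin r, (T + ε') := by
          refine Finset.sum_le_sum fun j _ => ?_
          rw [hNB.2.1]
          refine le_trans (mul_le_of_le_one_left (hNB.nonneg _) ?_) ((hv j).2)
          rw [abs_of_nonneg (by linarith [Int.floor_le (t j)] : (0:ℝ) ≤ t j - ⌊t j⌋)]
          linarith [Int.lt_floor_add_one (t j)]
      _ = R * (T + ε') := by
          rw [Finset.sum_const, Finset.card_univ, Fintype.card_fin, nsmul_eq_mul, hr]
  calc NB (LinearMap.baseChange ℝ α (y - (1:ℝ) ⊗ₜ[ℤ] a) + u)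
      ≤ NB (LinearMap.baseChange ℝ α (y - (1:ℝ) ⊗ₜ[ℤ] a)) + NB u := hNB.2.2 _ _
    _ = NA (y - (1:ℝ) ⊗ₜ[ℤ] a) + NB u := by rw [hiso]
    _ ≤ (cA + ε') + R * (T + ε') := by linarith
    _ ≤ cA + T * R + ε := by
        have h2 : ε' * (1 + R) ≤ ε := by
          rw [hε']
          rw [div_mul_eq_mul_div, div_le_iff₀ (by linarith : (0:ℝ) < 2 * R + 2)]
          nlinarith
        nlinarith

/-- Basis estimate for `B` from data for `A` and the quotient. -/
lemma step_basis (hNA : IsNorm NA) (hNB : IsNorm NB)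
    (hinj : Injective α)
    (hiso : ∀ v, NB (LinearMap.baseChange ℝ α v) = NA v)
    {cA dA : ℝ}
    (hcov : ∀ ε > (0:ℝ), ∀ w : ℝ ⊗[ℤ] A, ∃ a : A, NA (w - (1:ℝ) ⊗ₜ[ℤ] a) ≤ cA + ε)
    (hbas : ∀ ε > (0:ℝ), ∃ l ∈ lamSet NA, l ≤ dA + ε)
    {ε : ℝ} (hε : 0 < ε) :
    ∃ l ∈ lamSet NB, l ≤
      max dA (lambdaQ (qNorm NB (LinearMap.baseChange ℝ (LinearMap.range α).mkQ)) + cA)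
        + ε := by
  classical
  set T := lambdaQ (qNorm NB (LinearMap.baseChange ℝ (LinearMap.range α).mkQ)) with hT
  obtain ⟨r, q, b, v, hr, hq_li, hq_sp, hmk, hv, hb⟩ :=
    step_core hNA hNB hiso hcov hε
  obtain ⟨l, hl_mem, hl_le⟩ := hbas ε hε
  obtain ⟨p, eA, heA_li, heA_sp, heA_bd⟩ := hl_mem
  obtain ⟨hker, hfinj⟩ := exact_rat α hinj
  have hgwb : (⇑(LinearMap.baseChange ℚ (LinearMap.range α).mkQ))
      ∘ (fun j => ((1:ℚ) ⊗ₜ[ℤ] b j : ℚ ⊗[ℤ] B))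
      = fun j => ((1:ℚ) ⊗ₜ[ℤ] q j : ℚ ⊗[ℤ] (B ⧸ LinearMap.range α)) := by
    funext j
    simp only [comp_apply, LinearMap.baseChange_tmul, hmk j]
  have hBE := basis_extend (LinearMap.baseChange ℚ α)
    (LinearMap.baseChange ℚ (LinearMap.range α).mkQ) hker hfinj
    heA_li heA_sp (by rw [hgwb]; exact hq_li) (by rw [hgwb]; exact hq_sp)
  obtain ⟨Hli, Hsp⟩ := hBE
  set e' : Fin (p + r) → B := Fin.append (fun i => α (eA i)) b with he'
  have heq : (fun i => ((1:ℚ) ⊗ₜ[ℤ] e' i : ℚ ⊗[ℤ] B))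
      = Fin.append (⇑(LinearMap.baseChange ℚ α)
          ∘ (fun i => ((1:ℚ) ⊗ₜ[ℤ] eA i : ℚ ⊗[ℤ] A)))
        (fun j => ((1:ℚ) ⊗ₜ[ℤ] b j : ℚ ⊗[ℤ] B)) := by
    funext i
    refine Fin.addCases (fun i0 => ?_) (fun j0 => ?_) i
    · rw [he', Fin.append_left, Fin.append_left]
      simp only [comp_apply, LinearMap.baseChange_tmul]
    · rw [he', Fin.append_right, Fin.append_right]
  refine ⟨max dA (T + cA) + ε, ⟨p + r, e', ?_, ?_, ?_⟩, le_refl _⟩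
  · rw [heq]; exact Hli
  · rw [heq]; exact Hsp
  · intro i
    refine Fin.addCases (fun i0 => ?_) (fun j0 => ?_) i
    · rw [he', Fin.append_left]
      have h1 : ((1:ℝ) ⊗ₜ[ℤ] (α (eA i0)) : ℝ ⊗[ℤ] B)
          = LinearMap.baseChange ℝ α ((1:ℝ) ⊗ₜ[ℤ] eA i0) := by
        rw [LinearMap.baseChange_tmul]
      rw [h1, hiso]
      have := heA_bd i0
      calc NA ((1:ℝ) ⊗ₜ[ℤ] eA i0) ≤ l := this
        _ ≤ dA + ε := hl_le
        _ ≤ max dA (T + cA) + ε := by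
            have := le_max_left dA (T + cA); linarith
    · rw [he', Fin.append_right]
      calc NB ((1:ℝ) ⊗ₜ[ℤ] b j0) ≤ T + cA + ε := hb j0
        _ ≤ max dA (T + cA) + ε := by
            have := le_max_right dA (T + cA); linarith

end StepMain

section Base
variable {M₀ : Type*} [AddCommGroup M₀] [Module.Finite ℤ M₀] {N₀ : ℝ ⊗[ℤ] M₀ → ℝ}

lemma base_cov (hN : IsNorm N₀) {ε : ℝ} (hε : 0 < ε) (w : ℝ ⊗[ℤ] M₀) :
    ∃ a : M₀, N₀ (w - (1:ℝ) ⊗ₜ[ℤ] a) ≤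
      lambdaQ N₀ * (Module.finrank ℚ (ℚ ⊗[ℤ] M₀) : ℝ) + ε := by
  set rk := Module.finrank ℚ (ℚ ⊗[ℤ] M₀) with hrk
  set ε' := ε / (rk + 1) with hε'
  have hε'0 : 0 < ε' := by rw [hε']; positivity
  obtain ⟨l, hl_mem, hl_lt⟩ := exists_lt_lambdaQ_add (lamSet_nonempty N₀) hε'0
  obtain ⟨m, e, hli, hsp, hbd⟩ := hl_mem
  have hm : m = rk := card_eq_finrank hli hsp
  obtain ⟨a, ha⟩ := round_lemma hN hsp hbd w
  refine ⟨a, le_trans ha ?_⟩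
  rw [hm]
  have h1 : (rk : ℝ) * l ≤ (rk : ℝ) * (lambdaQ N₀ + ε') :=
    mul_le_mul_of_nonneg_left (le_of_lt hl_lt) (Nat.cast_nonneg rk)
  have h2 : (rk : ℝ) * ε' ≤ ε := by
    rw [hε']
    rw [show (rk:ℝ) * (ε/((rk:ℝ)+1)) = (rk:ℝ)*ε/((rk:ℝ)+1) by ring,
      div_le_iff₀ (by positivity : (0:ℝ) < (rk:ℝ)+1)]
    nlinarith [Nat.cast_nonneg (α := ℝ) rk, hε]
  nlinarith [Nat.cast_nonneg (α := ℝ) rk]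

end Base

/-- **chain estimate for isometric inclusions.** Given a chain of
inclusions `M 0 ⊆ M 1 ⊆ ⋯ ⊆ M (n+1)` of normed finitely generated `ℤ`-modules where each
norm is the restriction of the next one (hence of that of `M (n+1)`), with
`Q 0 = M 0` and `Q (i+1) = M (i+1)/M i` carrying the quotient norms, one has
`λ_ℚ(M (n+1)) ≤ λ_ℚ(Q (n+1)) + ∑_{i=0}^{n} λ_ℚ(Q i) · rk (Q i)`, where the top term
(`i = n+1`) is taken without the rank factor. -/
theorem lambdaQ_chain_estimate_of_isometric (n : ℕ)
    (M : Fin (n + 2) → Type*) [∀ i, AddCommGroup (M i)] [∀ i, Module.Finite ℤ (M i)]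
    (N : ∀ i, ℝ ⊗[ℤ] M i → ℝ) (hN : ∀ i, IsNorm (N i))
    (α : ∀ i : Fin (n + 1), M i.castSucc →ₗ[ℤ] M i.succ)
    (hinj : ∀ i, Function.Injective (α i))
    (hisom : ∀ i (v : ℝ ⊗[ℤ] M i.castSucc),
      N i.succ (LinearMap.baseChange ℝ (α i) v) = N i.castSucc v) :
    lambdaQ (N (Fin.last (n + 1))) ≤
      lambdaQ (qNorm (N (Fin.last n).succ)
          (LinearMap.baseChange ℝ (LinearMap.range (α (Fin.last n))).mkQ))
        + lambdaQ (N 0) * (Module.finrank ℚ (ℚ ⊗[ℤ] M 0) : ℝ)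
        + ∑ k : Fin n,
            lambdaQ (qNorm (N k.castSucc.succ)
                (LinearMap.baseChange ℝ (LinearMap.range (α k.castSucc)).mkQ))
              * (Module.finrank ℚ
                  (ℚ ⊗[ℤ] (M k.castSucc.succ ⧸ LinearMap.range (α k.castSucc))) : ℝ) := by
  classical
  set T : Fin (n+1) → ℝ := fun i =>
    lambdaQ (qNorm (N i.succ) (LinearMap.baseChange ℝ (LinearMap.range (α i)).mkQ)) with hT
  set R : Fin (n+1) → ℝ := fun i =>
    (Module.finrank ℚ (ℚ ⊗[ℤ] (M i.succ ⧸ LinearMap.range (α i))) : ℝ) with hRdef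
  set lam0 := lambdaQ (N 0) with hlam0
  set rk0 : ℝ := (Module.finrank ℚ (ℚ ⊗[ℤ] M 0) : ℝ) with hrk0
  set C : ℕ → ℝ := fun j => lam0 * rk0 +
    ∑ k ∈ Finset.univ.filter (fun k : Fin (n+1) => (k:ℕ)+1 ≤ j), T k * R k with hC
  set D : ℕ → ℝ := fun j => max lam0 (C j) with hD
  have hT0 : ∀ i, 0 ≤ T i := fun i => lambdaQ_nonneg _ (qNorm_nonneg (hN _).nonneg)
  have hR0 : ∀ i, 0 ≤ R i := fun i => Nat.cast_nonneg _
  have hlam00 : 0 ≤ lam0 := lambdaQ_nonneg _ (hN 0).nonneg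
  have hrk00 : 0 ≤ rk0 := Nat.cast_nonneg _
  have hTle : ∀ i, T i ≤ T i * R i := by
    intro i
    rcases Nat.eq_zero_or_pos
      (Module.finrank ℚ (ℚ ⊗[ℤ] (M i.succ ⧸ LinearMap.range (α i)))) with h | h
    · have hz : T i = 0 := lambdaQ_eq_zero_of_subsingleton _ (finrank_zero_iff.mp h)
      rw [hz, zero_mul]
    · refine le_mul_of_one_le_right (hT0 i) ?_
      simp only [hRdef]
      exact_mod_cast h
  have hlam0le : lam0 ≤ lam0 * rk0 := by
    rcases Nat.eq_zero_or_pos (Module.finrank ℚ (ℚ ⊗[ℤ] M 0)) with h | h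
    · have hz : lam0 = 0 := lambdaQ_eq_zero_of_subsingleton _ (finrank_zero_iff.mp h)
      rw [hz, zero_mul]
    · refine le_mul_of_one_le_right hlam00 ?_
      simp only [hrk0]
      exact_mod_cast h
  have hCstep : ∀ i : Fin (n+1), C ((i:ℕ)+1) = C (i:ℕ) + T i * R i := by
    intro i
    simp only [hC]
    have hfe : Finset.univ.filter (fun k : Fin (n+1) => (k:ℕ)+1 ≤ (i:ℕ)+1)
        = insert i (Finset.univ.filter (fun k : Fin (n+1) => (k:ℕ)+1 ≤ (i:ℕ))) := by
      ext k
      simp only [Finset.mem_filter, Finset.mem_univ, true_and, Finset.mem_insert, Fin.ext_iff]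
      omega
    rw [hfe, Finset.sum_insert (by simp)]
    ring
  -- the inductive claim for `M 0 ⊆ ⋯ ⊆ M n`
  have key : ∀ j : Fin (n+1),
      (∀ ε > (0:ℝ), ∀ w : ℝ ⊗[ℤ] M j.castSucc, ∃ a : M j.castSucc,
        N j.castSucc (w - (1:ℝ) ⊗ₜ[ℤ] a) ≤ C (j:ℕ) + ε) ∧
      (∀ ε > (0:ℝ), ∃ l ∈ lamSet (N j.castSucc), l ≤ D (j:ℕ) + ε) := by
    intro j
    induction j using Fin.induction with
    | zero =>
        constructor
        · intro ε hε w
          obtain ⟨a, ha⟩ := base_cov (hN 0) hε w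
          refine ⟨a, le_trans ha ?_⟩
          have hC0 : C 0 = lam0 * rk0 := by
            simp only [hC]
            have : Finset.univ.filter (fun k : Fin (n+1) => (k:ℕ)+1 ≤ 0) = ∅ := by
              ext k; simp
            rw [this, Finset.sum_empty, add_zero]
          simp only [Fin.val_zero]
          rw [hC0]
        · intro ε hε
          obtain ⟨l, hl_mem, hl_lt⟩ := exists_lt_lambdaQ_add (lamSet_nonempty (N 0)) hε
          refine ⟨l, hl_mem, ?_⟩
          have hl_lt' : l < lam0 + ε := hl_lt
          have hD0 : lam0 ≤ D 0 := le_max_left _ _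
          simp only [Fin.val_zero]
          linarith
    | succ i ih =>
        have hcov := ih.1
        have hbas := ih.2
        constructor
        · intro ε hε w
          obtain ⟨b, hb⟩ := step_cov (hN _) (hN _) (hisom i.castSucc) hcov hε w
          refine ⟨b, le_trans hb ?_⟩
          have hst := hCstep i.castSucc
          simp only [Fin.coe_castSucc] at hst
          rw [Fin.val_succ, hst]
          exact le_refl _
        · intro ε hε
          obtain ⟨l, hl_mem, hl_le⟩ := step_basis (hN _) (hN _) (hinj i.castSucc)
            (hisom i.castSucc) hcov hbas hε
          have hl_le' : l ≤ max (D (i:ℕ)) (T i.castSucc + C (i:ℕ)) + ε := hl_le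
          refine ⟨l, hl_mem, le_trans hl_le' ?_⟩
          have hstep := hCstep i.castSucc
          simp only [Fin.coe_castSucc] at hstep
          rw [Fin.val_succ]
          have h1 : D (i:ℕ) ≤ D ((i:ℕ)+1) := by
            simp only [hD]
            refine max_le (le_max_left _ _) (le_trans ?_ (le_max_right _ _))
            rw [hstep]
            nlinarith [hT0 i.castSucc, hR0 i.castSucc]
          have h2 : T i.castSucc + C (i:ℕ) ≤ D ((i:ℕ)+1) := by
            refine le_trans ?_ (le_max_right _ _)
            rw [hstep]
            linarith [hTle i.castSucc]
          have := max_le h1 h2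
          linarith [max_le h1 h2]
  -- final step
  obtain ⟨hcovn, hbasn⟩ := key (Fin.last n)
  have hfinal : ∀ ε > (0:ℝ), ∃ l ∈ lamSet (N (Fin.last (n+1))), l ≤
      max (D n) (T (Fin.last n) + C n) + ε := by
    intro ε hε
    obtain ⟨l, hl_mem, hl_le⟩ := step_basis (hN _) (hN _) (hinj (Fin.last n))
      (hisom (Fin.last n)) hcovn hbasn hε
    exact ⟨l, hl_mem, hl_le⟩
  have hDn0 : 0 ≤ D n := le_trans hlam00 (le_max_left _ _)
  have hle : lambdaQ (N (Fin.last (n+1))) ≤ max (D n) (T (Fin.last n) + C n) := by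
    refine le_of_forall_pos_le_add ?_
    intro ε hε
    obtain ⟨l, hl_mem, hl_le⟩ := hfinal ε hε
    refine lambdaQ_le (lamSet_upward hl_mem hl_le) ?_
    have h0 : 0 ≤ max (D n) (T (Fin.last n) + C n) := le_trans hDn0 (le_max_left _ _)
    linarith
  have hCn : C n = lam0 * rk0 + ∑ k : Fin n, T k.castSucc * R k.castSucc := by
    simp only [hC]
    congr 1
    have hfe : Finset.univ.filter (fun k : Fin (n+1) => (k:ℕ)+1 ≤ n)
        = Finset.univ.erase (Fin.last n) := by
      ext k
      simp only [Finset.mem_filter, Finset.mem_univ, true_and, Finset.mem_erase, and_true,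
        Ne, Fin.ext_iff, Fin.val_last]
      omega
    rw [hfe, Finset.sum_erase_eq_sub (Finset.mem_univ _),
      Fin.sum_univ_castSucc (f := fun k : Fin (n+1) => T k * R k)]
    ring
  have hSig0 : (0:ℝ) ≤ ∑ k : Fin n, T k.castSucc * R k.castSucc :=
    Finset.sum_nonneg fun k _ => mul_nonneg (hT0 _) (hR0 _)
  have hmaxle : max (D n) (T (Fin.last n) + C n) ≤ T (Fin.last n) + C n := by
    refine max_le ?_ (le_refl _)
    simp only [hD]
    refine max_le ?_ ?_
    · rw [hCn]; linarith [hlam0le, hT0 (Fin.last n)]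
    · linarith [hT0 (Fin.last n)]
  have hfinal2 : T (Fin.last n) + C n
      ≤ T (Fin.last n) + lam0 * rk0 + ∑ k : Fin n, T k.castSucc * R k.castSucc := by
    rw [hCn]; linarith
  exact le_trans (le_trans hle hmaxle) hfinal2
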